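/- Let φ be a contractive RDS on a separable Hilbert space H with a weak-* mean ergodic associated Markov semigroup P_t f(x) = E[f(φ(t,·)x)] with limiting invariant measure μ. If for every pair x, y ∈ H one has ‖φ(t,ω)x − φ(t,ω)y‖_H → 0 ℙ-a.s. as t → ∞, then P_t is strongly mixing: for every ν ∈ M₁(H), P_t*ν → μ weakly as t → ∞. -/

import Mathlib

open MeasureTheory Filter Topology NNReal

/-- Key step: convergence of `P_t^* ν`-integrals for bounded *Lipschitz* test functions. -/
lemma lipschitz_integral_tendsto
    {Ω : Type*} [MeasurableSpace Ω] (P : Measure Ω) [IsProbabilityMeasure P]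
    {H : Type*} [NormedAddCommGroup H] [InnerProductSpace ℝ H]
    [TopologicalSpace.SeparableSpace H] [MeasurableSpace H] [BorelSpace H]
    (φ : ℝ → Ω → H → H)
    (hφmeas : ∀ t : ℝ, Measurable fun q : Ω × H => φ t q.1 q.2)
    (μ : Measure H) [IsProbabilityMeasure μ]
    (hμinv : ∀ t ≥ (0:ℝ), ∀ f : BoundedContinuousFunction H ℝ,
      ∫ x, ∫ ω, f (φ t ω x) ∂P ∂μ = ∫ x, f x ∂μ)
    (hconv : ∀ x y : H, ∀ᵐ ω ∂P,
      Tendsto (fun t : ℝ => ‖φ t ω x - φ t ω y‖) atTop (𝓝 0))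
    (ν : Measure H) [IsProbabilityMeasure ν]
    (g : BoundedContinuousFunction H ℝ) (K : ℝ≥0) (hg : LipschitzWith K g) :
    Tendsto (fun t : ℝ => ∫ x, ∫ ω, g (φ t ω x) ∂P ∂ν) atTop (𝓝 (∫ x, g x ∂μ)) := by
  haveI : SecondCountableTopology H := UniformSpace.secondCountable_of_separable H
  set C : ℝ := ‖g‖ with hC
  have hC0 : (0:ℝ) ≤ C := norm_nonneg g
  -- the truncated modulus
  set m : ℝ → H × H → ℝ :=
    fun t p => ∫ ω, min (2 * C) ((K : ℝ) * ‖φ t ω p.1 - φ t ω p.2‖) ∂P with hm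
  have hmin_meas : ∀ t, Measurable fun q : (H × H) × Ω =>
      min (2 * C) ((K : ℝ) * ‖φ t q.2 q.1.1 - φ t q.2 q.1.2‖) := by
    intro t
    have h1 : Measurable fun q : (H × H) × Ω => φ t q.2 q.1.1 :=
      (hφmeas t).comp (measurable_snd.prodMk (measurable_fst.comp measurable_fst))
    have h2 : Measurable fun q : (H × H) × Ω => φ t q.2 q.1.2 :=
      (hφmeas t).comp (measurable_snd.prodMk (measurable_snd.comp measurable_fst))
    exact measurable_const.min (((h1.sub h2).norm).const_mul _)
  have hmin_nonneg : ∀ t (x y : H) (ω : Ω),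
      0 ≤ min (2 * C) ((K : ℝ) * ‖φ t ω x - φ t ω y‖) :=
    fun t x y ω => le_min (by positivity) (by positivity)
  have hmin_le : ∀ t (x y : H) (ω : Ω),
      ‖min (2 * C) ((K : ℝ) * ‖φ t ω x - φ t ω y‖)‖ ≤ 2 * C := by
    intro t x y ω
    rw [Real.norm_eq_abs, abs_of_nonneg (hmin_nonneg t x y ω)]
    exact min_le_left _ _
  have hm_meas : ∀ t, StronglyMeasurable (m t) := by
    intro t
    exact (hmin_meas t).stronglyMeasurable.integral_prod_right'
  -- per-pair convergence of `m`
  have hm_tendsto : ∀ x y : H, Tendsto (fun t => m t (x, y)) atTop (𝓝 0) := by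
    intro x y
    have key : Tendsto (fun t => ∫ ω,
        min (2 * C) ((K : ℝ) * ‖φ t ω x - φ t ω y‖) ∂P) atTop (𝓝 (∫ _ω : Ω, (0:ℝ) ∂P)) := by
      apply tendsto_integral_filter_of_dominated_convergence (fun _ => 2 * C)
      · refine Eventually.of_forall fun t => ?_
        have : Measurable fun ω : Ω =>
            min (2 * C) ((K : ℝ) * ‖φ t ω x - φ t ω y‖) :=
          (hmin_meas t).comp
            ((measurable_const : Measurable fun _ : Ω => ((x, y) : H × H)).prodMk measurable_id)
        exact this.aestronglyMeasurable
      · exact Eventually.of_forall fun t =>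
          Eventually.of_forall fun ω => hmin_le t x y ω
      · exact integrable_const _
      · filter_upwards [hconv x y] with ω hω
        have h1 : Tendsto (fun t => (K : ℝ) * ‖φ t ω x - φ t ω y‖) atTop (𝓝 ((K : ℝ) * 0)) :=
          hω.const_mul _
        have h2 := (tendsto_const_nhds (x := (2*C)) (f := atTop (α := ℝ))).min h1
        simpa [min_eq_right (by positivity : (0:ℝ) ≤ 2 * C)] using h2
    simpa using key
  -- convergence of the doubly-integrated modulus
  have hB : Tendsto (fun t => ∫ p, m t p ∂(ν.prod μ)) atTop (𝓝 0) := by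
    have key : Tendsto (fun t => ∫ p, m t p ∂(ν.prod μ)) atTop
        (𝓝 (∫ _p : H × H, (0:ℝ) ∂(ν.prod μ))) := by
      apply tendsto_integral_filter_of_dominated_convergence (fun _ => 2 * C)
      · exact Eventually.of_forall fun t => (hm_meas t).aestronglyMeasurable
      · refine Eventually.of_forall fun t => Eventually.of_forall fun p => ?_
        simpa using norm_integral_le_of_norm_le_const (μ := P) (C := 2 * C)
          (Eventually.of_forall fun ω => hmin_le t p.1 p.2 ω)
      · exact integrable_const _
      · exact Eventually.of_forall fun p => hm_tendsto p.1 p.2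
    simpa using key
  -- measurability and bounds for the inner integral I t x
  have hI_meas : ∀ t, StronglyMeasurable fun x : H => ∫ ω, g (φ t ω x) ∂P := by
    intro t
    have : StronglyMeasurable fun q : H × Ω => g (φ t q.2 q.1) :=
      (g.continuous.measurable.comp
        ((hφmeas t).comp (measurable_snd.prodMk measurable_fst))).stronglyMeasurable
    exact this.integral_prod_right'
  have hgφ_meas : ∀ t (x : H), Measurable fun ω : Ω => g (φ t ω x) := by
    intro t x
    exact g.continuous.measurable.comp ((hφmeas t).comp (measurable_id.prodMk measurable_const))
  have hgφ_int : ∀ t (x : H), Integrable (fun ω : Ω => g (φ t ω x)) P := by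
    intro t x
    exact ⟨(hgφ_meas t x).aestronglyMeasurable,
      HasFiniteIntegral.of_bounded (C := C) (Eventually.of_forall fun ω => g.norm_coe_le_norm _)⟩
  have hI_bd : ∀ t (x : H), ‖∫ ω, g (φ t ω x) ∂P‖ ≤ C := by
    intro t x
    have := norm_integral_le_of_norm_le_const (μ := P) (f := fun ω => g (φ t ω x)) (C := C)
      (Eventually.of_forall fun ω => g.norm_coe_le_norm _)
    simpa using this
  have hI_int : ∀ t (κ : Measure H) [IsProbabilityMeasure κ],
      Integrable (fun x => ∫ ω, g (φ t ω x) ∂P) κ := by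
    intro t κ _
    exact ⟨(hI_meas t).aestronglyMeasurable,
      HasFiniteIntegral.of_bounded (C := C) (Eventually.of_forall fun x => hI_bd t x)⟩
  -- the pointwise estimate |I t x - I t y| ≤ m t (x, y)
  have hIdiff : ∀ t (x y : H),
      |(∫ ω, g (φ t ω x) ∂P) - ∫ ω, g (φ t ω y) ∂P| ≤ m t (x, y) := by
    intro t x y
    rw [← integral_sub (hgφ_int t x) (hgφ_int t y)]
    have h1 : |∫ ω, (g (φ t ω x) - g (φ t ω y)) ∂P| ≤
        ∫ ω, |g (φ t ω x) - g (φ t ω y)| ∂P := by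
      simpa [Real.norm_eq_abs] using
        norm_integral_le_integral_norm (μ := P) (f := fun ω => g (φ t ω x) - g (φ t ω y))
    refine h1.trans ?_
    apply integral_mono ((hgφ_int t x).sub (hgφ_int t y)).abs
    · exact ⟨((hmin_meas t).comp
        ((measurable_const : Measurable fun _ : Ω => ((x, y) : H × H)).prodMk
          measurable_id)).aestronglyMeasurable,
        HasFiniteIntegral.of_bounded (C := 2 * C)
          (Eventually.of_forall fun ω => hmin_le t x y ω)⟩
    · intro ω
      refine le_min ?_ ?_
      · have := g.dist_le_two_norm (φ t ω x) (φ t ω y)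
        simpa [Real.dist_eq, hC] using this
      · have := hg.dist_le_mul (φ t ω x) (φ t ω y)
        simpa [Real.dist_eq, dist_eq_norm] using this
  -- the eventual bound |F t - L| ≤ B t
  set L : ℝ := ∫ x, g x ∂μ with hL
  have hbound : ∀ t ≥ (0:ℝ),
      ‖(∫ x, ∫ ω, g (φ t ω x) ∂P ∂ν) - L‖ ≤ ∫ p, m t p ∂(ν.prod μ) := by
    intro t ht
    set I : H → ℝ := fun x => ∫ ω, g (φ t ω x) ∂P with hIdef
    have hLinv : L = ∫ y, I y ∂μ := (hμinv t ht g).symm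
    have step1 : (∫ x, I x ∂ν) - L = ∫ x, (I x - L) ∂ν := by
      rw [integral_sub (hI_int t ν) (integrable_const L), integral_const]
      simp
      rfl
    have step2 : ∀ x : H, I x - L = ∫ y, (I x - I y) ∂μ := by
      intro x
      rw [integral_sub (integrable_const (I x)) (hI_int t μ), integral_const]
      simp [hLinv]
      rfl
    rw [Real.norm_eq_abs, step1]
    have habs : |∫ x, (I x - L) ∂ν| ≤ ∫ x, |I x - L| ∂ν := by
      simpa [Real.norm_eq_abs] using
        norm_integral_le_integral_norm (μ := ν) (f := fun x => I x - L)
    refine habs.trans ?_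
    have hm_int : Integrable (m t) (ν.prod μ) :=
      ⟨(hm_meas t).aestronglyMeasurable,
        HasFiniteIntegral.of_bounded (C := 2 * C) (Eventually.of_forall fun p => by
          simpa using norm_integral_le_of_norm_le_const (μ := P) (C := 2 * C)
            (Eventually.of_forall fun ω => hmin_le t p.1 p.2 ω))⟩
    have hprod : ∫ p, m t p ∂(ν.prod μ) = ∫ x, ∫ y, m t (x, y) ∂μ ∂ν :=
      integral_prod _ hm_int
    rw [hprod]
    have hmt_x_int : ∀ x : H, Integrable (fun y => m t (x, y)) μ := by
      intro x
      refine ⟨((hm_meas t).comp_measurable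
        (measurable_const.prodMk measurable_id)).aestronglyMeasurable, ?_⟩
      apply HasFiniteIntegral.of_bounded (C := 2 * C)
      refine Eventually.of_forall fun y => ?_
      simpa using norm_integral_le_of_norm_le_const (μ := P) (C := 2 * C)
        (Eventually.of_forall fun ω => hmin_le t x y ω)
    apply integral_mono
    · refine ⟨?_, ?_⟩
      · have h1 : AEStronglyMeasurable (fun x => I x - L) ν :=
          ((hI_meas t).aestronglyMeasurable).sub aestronglyMeasurable_const
        have h2 := h1.norm
        simpa [Real.norm_eq_abs] using h2
      apply HasFiniteIntegral.of_bounded (C := 2 * C)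
      refine Eventually.of_forall fun x => ?_
      rw [Real.norm_eq_abs, abs_abs]
      calc |I x - L| ≤ ‖I x‖ + ‖L‖ := by
            rw [Real.norm_eq_abs, Real.norm_eq_abs]; exact abs_sub _ _
        _ ≤ C + C := by
            refine add_le_add (hI_bd t x) ?_
            rw [hLinv]
            have := norm_integral_le_of_norm_le_const (μ := μ) (f := I) (C := C)
              (Eventually.of_forall fun y => hI_bd t y)
            simpa using this
        _ = 2 * C := by ring
    · refine ⟨?_, ?_⟩
      · have : StronglyMeasurable fun x : H => ∫ y, m t (x, y) ∂μ :=
          ((hm_meas t).measurable.stronglyMeasurable).integral_prod_right'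
        exact this.aestronglyMeasurable
      · apply HasFiniteIntegral.of_bounded (C := 2 * C)
        refine Eventually.of_forall fun x => ?_
        refine (norm_integral_le_of_norm_le_const (μ := μ) (C := 2 * C)
          (Eventually.of_forall fun y => ?_)).trans (by simp)
        simpa using norm_integral_le_of_norm_le_const (μ := P) (C := 2 * C)
          (Eventually.of_forall fun ω => hmin_le t x y ω)
    · intro x
      calc |I x - L| = |∫ y, (I x - I y) ∂μ| := by rw [step2 x]
        _ ≤ ∫ y, |I x - I y| ∂μ := by
            simpa [Real.norm_eq_abs] using
              norm_integral_le_integral_norm (μ := μ) (f := fun y => I x - I y)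
        _ ≤ ∫ y, m t (x, y) ∂μ := by
            apply integral_mono ((integrable_const (I x)).sub (hI_int t μ)).abs (hmt_x_int x)
            intro y
            exact hIdiff t x y
  -- squeeze
  have hdiff : Tendsto (fun t => (∫ x, ∫ ω, g (φ t ω x) ∂P ∂ν) - L) atTop (𝓝 0) := by
    apply squeeze_zero_norm' _ hB
    filter_upwards [eventually_ge_atTop (0:ℝ)] with t ht
    exact hbound t ht
  have := hdiff.add_const L
  simpa using this

/-- If a contractive RDS has an invariant measure `μ` and trajectories from any two
initial points come together a.s., then the Markov semigroup is strongly mixing: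
`P_t^* ν → μ` weakly for every probability measure `ν`. -/
theorem contractive_RDS_strongly_mixing
    {Ω : Type*} [MeasurableSpace Ω] (P : Measure Ω) [IsProbabilityMeasure P]
    {H : Type*} [NormedAddCommGroup H] [InnerProductSpace ℝ H] [CompleteSpace H]
    [TopologicalSpace.SeparableSpace H] [MeasurableSpace H] [BorelSpace H]
    (φ : ℝ → Ω → H → H)
    (hφmeas : ∀ t : ℝ, Measurable fun q : Ω × H => φ t q.1 q.2)
    (hcontr : ∀ t ≥ (0:ℝ), ∀ ω : Ω, ∀ x y : H,
      ‖φ t ω x - φ t ω y‖ ≤ ‖x - y‖)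
    (μ : Measure H) [IsProbabilityMeasure μ]
    (hμinv : ∀ t ≥ (0:ℝ), ∀ f : BoundedContinuousFunction H ℝ,
      ∫ x, ∫ ω, f (φ t ω x) ∂P ∂μ = ∫ x, f x ∂μ)
    (hconv : ∀ x y : H, ∀ᵐ ω ∂P,
      Tendsto (fun t : ℝ => ‖φ t ω x - φ t ω y‖) atTop (𝓝 0)) :
    ∀ (ν : Measure H), IsProbabilityMeasure ν →
      ∀ f : BoundedContinuousFunction H ℝ,
        Tendsto (fun t : ℝ => ∫ x, ∫ ω, f (φ t ω x) ∂P ∂ν) atTop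
          (𝓝 (∫ x, f x ∂μ)) := by
  intro ν hν f
  haveI := hν
  rw [Filter.tendsto_iff_seq_tendsto]
  intro s hs
  -- the laws at times s n
  have hTmeas : ∀ t : ℝ, Measurable fun q : H × Ω => φ t q.2 q.1 :=
    fun t => (hφmeas t).comp (measurable_snd.prodMk measurable_fst)
  set μs : ℕ → Measure H :=
    fun n => (ν.prod P).map (fun q : H × Ω => φ (s n) q.2 q.1) with hμs
  haveI : ∀ n, IsProbabilityMeasure (μs n) :=
    fun n => Measure.isProbabilityMeasure_map (hTmeas (s n)).aemeasurable
  have key : ∀ (g : BoundedContinuousFunction H ℝ) (n : ℕ),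
      ∫ x, g x ∂(μs n) = ∫ x, ∫ ω, g (φ (s n) ω x) ∂P ∂ν := by
    intro g n
    rw [hμs]
    rw [integral_map (hTmeas _).aemeasurable g.continuous.measurable.aestronglyMeasurable]
    have hint : Integrable (fun q : H × Ω => g (φ (s n) q.2 q.1)) (ν.prod P) :=
      ⟨(g.continuous.measurable.comp (hTmeas _)).aestronglyMeasurable,
        HasFiniteIntegral.of_bounded (C := ‖g‖)
          (Eventually.of_forall fun q => g.norm_coe_le_norm _)⟩
    rw [integral_prod _ hint]
  -- convergence for Lipschitz test functions
  have conv_g : ∀ (g : BoundedContinuousFunction H ℝ) (K : ℝ≥0), LipschitzWith K g →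
      Tendsto (fun n => ∫ x, g x ∂(μs n)) atTop (𝓝 (∫ x, g x ∂μ)) := by
    intro g K hK
    have := (lipschitz_integral_tendsto P φ hφmeas μ hμinv hconv ν g K hK).comp hs
    simpa [Function.comp_def, key] using this
  -- limsup on closed sets
  have h_closed : ∀ F : Set H, IsClosed F →
      atTop.limsup (fun n => μs n F) ≤ μ F := by
    intro F hF
    rcases F.eq_empty_or_nonempty with rfl | ⟨z, hz⟩
    · simp
    have key_δ : ∀ δ : ℝ, 0 < δ →
        atTop.limsup (fun n => μs n F) ≤ μ (Metric.cthickening δ F) := by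
      intro δ hδ
      -- the Lipschitz cutoff
      set gfun : H → ℝ := fun x => max (1 - Metric.infDist x F / δ) 0 with hgfun
      have gcont : Continuous gfun :=
        (continuous_const.sub ((Metric.continuous_infDist_pt F).div_const δ)).max
          continuous_const
      have g01 : ∀ x, 0 ≤ gfun x ∧ gfun x ≤ 1 := by
        intro x
        constructor
        · exact le_max_right _ _
        · apply max_le _ zero_le_one
          have := Metric.infDist_nonneg (x := x) (s := F)
          have : 0 ≤ Metric.infDist x F / δ := by positivity
          linarith
      have gbd : ∀ x, ‖gfun x‖ ≤ 1 := by
        intro x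
        rw [Real.norm_eq_abs, abs_of_nonneg (g01 x).1]
        exact (g01 x).2
      set g : BoundedContinuousFunction H ℝ :=
        BoundedContinuousFunction.ofNormedAddCommGroup gfun gcont 1 gbd with hgdef
      have gcoe : ∀ x, g x = gfun x := fun x => rfl
      have glip : LipschitzWith ⟨δ⁻¹, by positivity⟩ g := by
        apply LipschitzWith.of_dist_le_mul
        intro x y
        rw [Real.dist_eq, gcoe, gcoe]
        have hlip : |Metric.infDist y F - Metric.infDist x F| ≤ dist x y := by
          have := (Metric.lipschitz_infDist_pt F).dist_le_mul y x
          rw [Real.dist_eq] at this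
          simpa [dist_comm] using this
        calc |gfun x - gfun y| ≤
            |(1 - Metric.infDist x F / δ) - (1 - Metric.infDist y F / δ)| :=
              abs_max_sub_max_le_abs _ _ _
          _ = |Metric.infDist y F - Metric.infDist x F| / δ := by
              rw [show (1 - Metric.infDist x F / δ) - (1 - Metric.infDist y F / δ)
                  = (Metric.infDist y F - Metric.infDist x F) / δ by field_simp; ring,
                abs_div, abs_of_pos hδ]
          _ ≤ dist x y / δ := by gcongr
          _ = (⟨δ⁻¹, by positivity⟩ : NNReal) * dist x y := by
              show dist x y / δ = δ⁻¹ * dist x y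
              rw [div_eq_inv_mul]
      -- g is 1 on F
      have hg_on_F : ∀ x ∈ F, g x = 1 := by
        intro x hx
        rw [gcoe, hgfun]
        simp [Metric.infDist_zero_of_mem hx]
      -- g vanishes outside the cthickening
      have hg_out : ∀ x, x ∉ Metric.cthickening δ F → g x = 0 := by
        intro x hx
        rw [gcoe, hgfun]
        have hd : δ ≤ Metric.infDist x F := by
          by_contra hlt
          push_neg at hlt
          exact hx (Metric.thickening_subset_cthickening δ F
            ((Metric.mem_thickening_iff_infDist_lt ⟨z, hz⟩).2 hlt))
        have : 1 - Metric.infDist x F / δ ≤ 0 := by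
          have : 1 ≤ Metric.infDist x F / δ := (one_le_div hδ).2 hd
          linarith
        simp [max_eq_right this]
      -- measure of F is below the integral of g
      have hub : ∀ n, μs n F ≤ ENNReal.ofReal (∫ x, g x ∂(μs n)) := by
        intro n
        have h1 : (μs n F).toReal ≤ ∫ x, g x ∂(μs n) := by
          rw [← Measure.real_def, ← integral_indicator_one hF.measurableSet]
          apply integral_mono ((integrable_const (1:ℝ)).indicator hF.measurableSet)
            (g.integrable _)
          intro x
          by_cases hx : x ∈ F
          · simp [Set.indicator_of_mem hx, (hg_on_F x hx).symm.le, hg_on_F x hx]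
          · simp only [Set.indicator_of_notMem hx]
            exact (g01 x).1
        calc μs n F = ENNReal.ofReal (μs n F).toReal :=
              (ENNReal.ofReal_toReal (measure_ne_top _ _)).symm
          _ ≤ ENNReal.ofReal (∫ x, g x ∂(μs n)) := ENNReal.ofReal_le_ofReal h1
      -- the integral of g against μ is below the measure of the cthickening
      have hub2 : ∫ x, g x ∂μ ≤ (μ (Metric.cthickening δ F)).toReal := by
        rw [← Measure.real_def, ← integral_indicator_one Metric.isClosed_cthickening.measurableSet]
        apply integral_mono (g.integrable _)
          ((integrable_const (1:ℝ)).indicator Metric.isClosed_cthickening.measurableSet)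
        intro x
        by_cases hx : x ∈ Metric.cthickening δ F
        · simp only [Set.indicator_of_mem hx]
          exact (g01 x).2
        · simp only [Set.indicator_of_notMem hx]
          exact le_of_eq (hg_out x hx)
      have hlim : Tendsto (fun n => ENNReal.ofReal (∫ x, g x ∂(μs n))) atTop
          (𝓝 (ENNReal.ofReal (∫ x, g x ∂μ))) :=
        ENNReal.tendsto_ofReal (conv_g g _ glip)
      calc atTop.limsup (fun n => μs n F)
          ≤ atTop.limsup (fun n => ENNReal.ofReal (∫ x, g x ∂(μs n))) :=
            limsup_le_limsup (Eventually.of_forall hub)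
        _ = ENNReal.ofReal (∫ x, g x ∂μ) := hlim.limsup_eq
        _ ≤ μ (Metric.cthickening δ F) := by
            calc ENNReal.ofReal (∫ x, g x ∂μ)
                ≤ ENNReal.ofReal (μ (Metric.cthickening δ F)).toReal :=
                  ENNReal.ofReal_le_ofReal hub2
              _ = μ (Metric.cthickening δ F) := ENNReal.ofReal_toReal (measure_ne_top _ _)
    -- pass to the limit δ → 0
    have ht := tendsto_measure_cthickening_of_isClosed (μ := μ) (s := F)
      ⟨1, zero_lt_one, measure_ne_top _ _⟩ hF
    have hu : Tendsto (fun n : ℕ => 1 / ((n : ℝ) + 1)) atTop (𝓝 0) :=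
      tendsto_one_div_add_atTop_nhds_zero_nat
    have hcomp : Tendsto (fun n : ℕ => μ (Metric.cthickening (1 / ((n : ℝ) + 1)) F)) atTop
        (𝓝 (μ F)) := ht.comp hu
    exact ge_of_tendsto' hcomp fun n => key_δ _ (by positivity)
  -- liminf on open sets
  have h_opens : ∀ G : Set H, IsOpen G → μ G ≤ atTop.liminf (fun n => μs n G) := by
    intro G hG
    exact le_measure_liminf_of_limsup_measure_compl_le hG.measurableSet
      (h_closed Gᶜ hG.isClosed_compl)
  -- conclude via the portmanteau liminf lemma applied to f + C and C - f
  set C : ℝ := ‖f‖ with hCdef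
  set a : ℕ → ℝ := fun n => ∫ x, f x ∂(μs n) with ha
  have hgoal_eq : (fun n => ∫ x, ∫ ω, f (φ (s n) ω x) ∂P ∂ν) = a :=
    funext fun n => (key f n).symm
  have habs : ∀ n, |a n| ≤ C := by
    intro n
    have := norm_integral_le_of_norm_le_const (μ := μs n) (f := fun x => f x) (C := C)
      (Eventually.of_forall fun x => f.norm_coe_le_norm x)
    simpa using this
  have hbdd_above : atTop.IsBoundedUnder (· ≤ ·) a :=
    isBoundedUnder_of ⟨C, fun n => (abs_le.1 (habs n)).2⟩
  have hbdd_below : atTop.IsBoundedUnder (· ≥ ·) a :=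
    isBoundedUnder_of ⟨-C, fun n => (abs_le.1 (habs n)).1⟩
  have hcob_ge : atTop.IsCoboundedUnder (· ≥ ·) a := hbdd_above.isCoboundedUnder_ge
  have hcob_le : atTop.IsCoboundedUnder (· ≤ ·) a := hbdd_below.isCoboundedUnder_le
  have hint_plus : ∀ (κ : Measure H) [IsProbabilityMeasure κ],
      ∫ x, (f + BoundedContinuousFunction.const H C) x ∂κ = (∫ x, f x ∂κ) + C := by
    intro κ _
    rw [BoundedContinuousFunction.integral_add_const]
    simp
  have hint_minus : ∀ (κ : Measure H) [IsProbabilityMeasure κ],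
      ∫ x, (BoundedContinuousFunction.const H C - f) x ∂κ = C - ∫ x, f x ∂κ := by
    intro κ _
    rw [BoundedContinuousFunction.integral_const_sub]
    simp
  have hliminf : ∫ x, f x ∂μ ≤ atTop.liminf a := by
    have hnn : (0 : BoundedContinuousFunction H ℝ) ≤ f + BoundedContinuousFunction.const H C := by
      intro x
      show (0 : ℝ) ≤ f x + C
      have h1 : -C ≤ f x := by
        rw [hCdef]
        exact (abs_le.1 (by simpa [Real.norm_eq_abs] using f.norm_coe_le_norm x)).1
      linarith
    have := integral_le_liminf_integral_of_forall_isOpen_measure_le_liminf_measure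
      (μ := μ) (μs := μs) (f := f + BoundedContinuousFunction.const H C) hnn h_opens
    rw [hint_plus μ] at this
    have heq : (fun n => ∫ x, (f + BoundedContinuousFunction.const H C) x ∂(μs n)) =
        fun n => a n + C := funext fun n => hint_plus (μs n)
    rw [heq, liminf_add_const atTop a C hcob_ge hbdd_below] at this
    linarith
  have hlimsup : atTop.limsup a ≤ ∫ x, f x ∂μ := by
    have hnn : (0 : BoundedContinuousFunction H ℝ) ≤ BoundedContinuousFunction.const H C - f := by
      intro x
      show (0 : ℝ) ≤ C - f x
      have h1 : f x ≤ C := by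
        rw [hCdef]
        exact (abs_le.1 (by simpa [Real.norm_eq_abs] using f.norm_coe_le_norm x)).2
      linarith
    have := integral_le_liminf_integral_of_forall_isOpen_measure_le_liminf_measure
      (μ := μ) (μs := μs) (f := BoundedContinuousFunction.const H C - f) hnn h_opens
    rw [hint_minus μ] at this
    have heq : (fun n => ∫ x, (BoundedContinuousFunction.const H C - f) x ∂(μs n)) =
        fun n => C - a n := funext fun n => hint_minus (μs n)
    rw [heq, liminf_const_sub atTop a C hbdd_above hcob_le] at this
    linarith
  have : Tendsto a atTop (𝓝 (∫ x, f x ∂μ)) :=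
    tendsto_of_le_liminf_of_limsup_le hliminf hlimsup hbdd_above hbdd_below
  show Tendsto ((fun t : ℝ => ∫ x, ∫ ω, f (φ t ω x) ∂P ∂ν) ∘ s) atTop (𝓝 (∫ x, f x ∂μ))
  have : ((fun t : ℝ => ∫ x, ∫ ω, f (φ t ω x) ∂P ∂ν) ∘ s) = a := by
    funext n
    exact (key f n).symm
  rw [this]
  exact tendsto_of_le_liminf_of_limsup_le hliminf hlimsup hbdd_above hbdd_below
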